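/- Near-tightness of the discrete Stam inequality: for the geometric pmf p_q(i) = q·(1−q)^i with 0 < q < 1, the product N_d(p_q)·I_d(p_q) tends to e² as q → 0⁺; hence any constant β with β·N_d(p)·I_d(p) > 1 for all admissible pmfs must satisfy β ≥ e^{−2}. -/

import Mathlib

open Filter Real

lemma geom_norm {q : ℝ} (hq0 : 0 < q) (hq1 : q < 1) : ∑' i : ℕ, q * (1 - q) ^ i = 1 := by
  rw [tsum_mul_left, tsum_geometric_of_lt_one (by linarith) (by linarith)]
  field_simp
  rw [sub_sub_cancel, div_self (ne_of_gt hq0)]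

lemma summable_i_geom {q : ℝ} (hq0 : 0 < q) (hq1 : q < 1) :
    Summable (fun i : ℕ => (i : ℝ) * (1 - q) ^ i) := by
  have := summable_pow_mul_geometric_of_norm_lt_one (R := ℝ) 1
    (r := 1 - q) (by rw [Real.norm_eq_abs, abs_lt]; constructor <;> linarith)
  simpa using this

lemma entropy_term_eq {q : ℝ} (hq0 : 0 < q) (hq1 : q < 1) :
    ∀ i : ℕ, q * (1 - q) ^ i * Real.log (q * (1 - q) ^ i)
      = Real.log q * (q * (1 - q) ^ i) + (q * Real.log (1 - q)) * ((i : ℝ) * (1 - q) ^ i) := by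
  intro i
  have h1q : (0:ℝ) < 1 - q := by linarith
  rw [Real.log_mul (ne_of_gt hq0) (by positivity), Real.log_pow]
  ring

lemma entropy_geom {q : ℝ} (hq0 : 0 < q) (hq1 : q < 1) :
    ∑' i : ℕ, q * (1 - q) ^ i * Real.log (q * (1 - q) ^ i)
      = Real.log q + (1 - q) / q * Real.log (1 - q) := by
  rw [tsum_congr (entropy_term_eq hq0 hq1), Summable.tsum_add
    ((((summable_geometric_of_lt_one (by linarith) (by linarith)).mul_left q).mul_left
      (Real.log q)))
    ((summable_i_geom hq0 hq1).mul_left _), tsum_mul_left, tsum_mul_left, tsum_mul_left,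
    tsum_geometric_of_lt_one (by linarith) (by linarith),
    tsum_coe_mul_geometric_of_norm_lt_one (𝕜 := ℝ)
      (by rw [Real.norm_eq_abs, abs_lt]; constructor <;> linarith)]
  have h : (1 : ℝ) - (1 - q) = q := by ring
  rw [h]
  field_simp

lemma fisher_geom {q : ℝ} (hq0 : 0 < q) (hq1 : q < 1) :
    ∑' i : ℕ, (Real.sqrt (q * (1 - q) ^ (i + 1)) - Real.sqrt (q * (1 - q) ^ i)) ^ 2
      = (1 - Real.sqrt (1 - q)) ^ 2 := by
  have h1q : (0:ℝ) ≤ 1 - q := by linarith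
  have hterm : ∀ i : ℕ, (Real.sqrt (q * (1 - q) ^ (i + 1)) - Real.sqrt (q * (1 - q) ^ i)) ^ 2
      = (1 - Real.sqrt (1 - q)) ^ 2 * (q * (1 - q) ^ i) := by
    intro i
    have h1 : q * (1 - q) ^ (i + 1) = (q * (1 - q) ^ i) * (1 - q) := by ring
    rw [h1, Real.sqrt_mul (by positivity)]
    have h2 : Real.sqrt (q * (1 - q) ^ i) ^ 2 = q * (1 - q) ^ i :=
      Real.sq_sqrt (by positivity)
    nlinarith [Real.sq_sqrt h1q, Real.sqrt_nonneg (1 - q), Real.sqrt_nonneg (q * (1-q)^i)]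
  rw [tsum_congr hterm, tsum_mul_left, geom_norm hq0 hq1, mul_one]

lemma key_eq {q : ℝ} (hq0 : 0 < q) (hq1 : q < 1) :
    Real.exp (2 * (-∑' i : ℕ, q * (1 - q) ^ i * Real.log (q * (1 - q) ^ i))) *
        (4 * ∑' i : ℕ, (Real.sqrt (q * (1 - q) ^ (i + 1)) - Real.sqrt (q * (1 - q) ^ i)) ^ 2)
      = Real.exp (-(2 * ((1 - q) / q * Real.log (1 - q)))) *
          (4 / (1 + Real.sqrt (1 - q)) ^ 2) := by
  rw [entropy_geom hq0 hq1, fisher_geom hq0 hq1]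
  set s := Real.sqrt (1 - q) with hs
  have hs2 : s ^ 2 = 1 - q := Real.sq_sqrt (by linarith)
  have hsn : 0 ≤ s := Real.sqrt_nonneg _
  have h1 : (1 - s) * (1 + s) = q := by nlinarith
  have hexp : Real.exp (2 * (-(Real.log q + (1 - q) / q * Real.log (1 - q))))
      = (q ^ 2)⁻¹ * Real.exp (-(2 * ((1 - q) / q * Real.log (1 - q)))) := by
    have h2 : 2 * (-(Real.log q + (1 - q) / q * Real.log (1 - q)))
        = -Real.log (q ^ 2) + -(2 * ((1 - q) / q * Real.log (1 - q))) := by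
      rw [Real.log_pow]; push_cast; ring
    rw [h2, Real.exp_add, Real.exp_neg, Real.exp_log (by positivity)]
  rw [hexp]
  have h1s : (0:ℝ) < 1 + s := by linarith
  have h2 : (1 - s) ^ 2 = q ^ 2 / (1 + s) ^ 2 := by
    rw [eq_div_iff (by positivity)]
    nlinarith [h1]
  rw [h2]
  field_simp

lemma main_tendsto :
    Tendsto
      (fun q : ℝ =>
        Real.exp (2 * (-∑' i : ℕ, q * (1 - q) ^ i * Real.log (q * (1 - q) ^ i))) *
          (4 * ∑' i : ℕ, (Real.sqrt (q * (1 - q) ^ (i + 1)) - Real.sqrt (q * (1 - q) ^ i)) ^ 2))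
      (nhdsWithin 0 (Set.Ioi 0)) (nhds (Real.exp 2)) := by
  have hslope : Tendsto (fun q : ℝ => Real.log (1 - q) / q)
      (nhdsWithin 0 (Set.Ioi 0)) (nhds (-1)) := by
    have hd : HasDerivAt (fun q : ℝ => Real.log (1 - q)) (-1) 0 := by
      have h1 : HasDerivAt (fun q : ℝ => 1 - q) (-1) 0 := by
        exact (hasDerivAt_id' 0).const_sub (1:ℝ)
      convert h1.log (by norm_num : (1:ℝ) - 0 ≠ 0) using 1; norm_num
    have h2 := (hasDerivAt_iff_tendsto_slope.mp hd).mono_left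
      (nhdsWithin_mono 0 (by intro x hx; exact ne_of_gt hx))
    refine h2.congr' ?_
    filter_upwards [self_mem_nhdsWithin] with q hq
    simp [slope_fun_def]
    ring
  have hA : Tendsto (fun q : ℝ => (1 - q) / q * Real.log (1 - q))
      (nhdsWithin 0 (Set.Ioi 0)) (nhds (-1)) := by
    have h1 : Tendsto (fun q : ℝ => (1 - q)) (nhdsWithin 0 (Set.Ioi 0)) (nhds 1) := by
      have : Tendsto (fun q : ℝ => (1 - q)) (nhds 0) (nhds 1) := by
        have := (continuous_const.sub continuous_id (f := fun q : ℝ => (1:ℝ))).tendsto 0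
        exact (by simpa using this : Tendsto ((fun q : ℝ => (1:ℝ)) - id) (nhds 0) (nhds 1))
      exact this.mono_left nhdsWithin_le_nhds
    have := h1.mul hslope
    rw [one_mul] at this
    refine this.congr ?_
    intro q
    ring
  have hExp : Tendsto (fun q : ℝ => Real.exp (-(2 * ((1 - q) / q * Real.log (1 - q)))))
      (nhdsWithin 0 (Set.Ioi 0)) (nhds (Real.exp 2)) := by
    have h1 : Tendsto (fun q : ℝ => -(2 * ((1 - q) / q * Real.log (1 - q))))
        (nhdsWithin 0 (Set.Ioi 0)) (nhds 2) := by
      have := (hA.const_mul (2:ℝ)).neg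
      norm_num at this
      exact this
    exact (Real.continuous_exp.continuousAt.tendsto).comp h1
  have hB : Tendsto (fun q : ℝ => 4 / (1 + Real.sqrt (1 - q)) ^ 2) (nhds 0) (nhds 1) := by
    have hc : ContinuousAt (fun q : ℝ => 4 / (1 + Real.sqrt (1 - q)) ^ 2) 0 := by
      apply ContinuousAt.div continuousAt_const
      · fun_prop
      · norm_num
    have h4 : (4:ℝ) / (1 + 1) ^ 2 = 1 := by norm_num
    simpa [h4] using hc.tendsto
  have hprod := hExp.mul (hB.mono_left nhdsWithin_le_nhds)
  rw [mul_one] at hprod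
  refine hprod.congr' ?_
  filter_upwards [Ioo_mem_nhdsGT_of_mem (by norm_num : (0:ℝ) ∈ Set.Ico (0:ℝ) 1)] with q hq
  exact (key_eq hq.1 hq.2).symm

theorem stam_near_tight :
    Tendsto
      (fun q : ℝ =>
        Real.exp (2 * (-∑' i : ℕ, q * (1 - q) ^ i * Real.log (q * (1 - q) ^ i))) *
          (4 * ∑' i : ℕ, (Real.sqrt (q * (1 - q) ^ (i + 1)) - Real.sqrt (q * (1 - q) ^ i)) ^ 2))
      (nhdsWithin 0 (Set.Ioi 0)) (nhds (Real.exp 2)) ∧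
    ∀ β : ℝ,
      (∀ p : ℕ → ℝ, (∀ i, 0 ≤ p i) → ∑' i, p i = 1 → Tendsto p atTop (nhds 0) →
        Summable (fun i : ℕ => p i * Real.log (p i)) →
        β * (Real.exp (2 * (-∑' i : ℕ, p i * Real.log (p i))) *
          (4 * ∑' i : ℕ, (Real.sqrt (p (i + 1)) - Real.sqrt (p i)) ^ 2)) > 1) →
      Real.exp (-2) ≤ β := by
  set F : ℝ → ℝ := fun q : ℝ =>
    Real.exp (2 * (-∑' i : ℕ, q * (1 - q) ^ i * Real.log (q * (1 - q) ^ i))) *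
      (4 * ∑' i : ℕ, (Real.sqrt (q * (1 - q) ^ (i + 1)) - Real.sqrt (q * (1 - q) ^ i)) ^ 2)
    with hF
  refine ⟨main_tendsto, ?_⟩
  intro β hβ
  have hev : ∀ᶠ q in nhdsWithin (0:ℝ) (Set.Ioi 0), (F q)⁻¹ ≤ β := by
    filter_upwards [Ioo_mem_nhdsGT_of_mem (by norm_num : (0:ℝ) ∈ Set.Ico (0:ℝ) 1)] with q hq
    obtain ⟨hq0, hq1⟩ := hq
    have h1q : (0:ℝ) < 1 - q := by linarith
    -- apply the hypothesis to the geometric pmf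
    have hβq := hβ (fun i => q * (1 - q) ^ i)
      (fun i => by positivity)
      (geom_norm hq0 hq1)
      (by
        have := (tendsto_pow_atTop_nhds_zero_of_lt_one (by linarith : (0:ℝ) ≤ 1 - q)
          (by linarith : (1:ℝ) - q < 1)).const_mul q
        simpa using this)
      (by
        refine Summable.congr ?_ (fun i => (entropy_term_eq hq0 hq1 i).symm)
        exact ((((summable_geometric_of_lt_one (by linarith) (by linarith)).mul_left q).mul_left
          (Real.log q))).add ((summable_i_geom hq0 hq1).mul_left _))
    have hβF : 1 < β * F q := hβq
    have hFpos : 0 < F q := by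
      rw [hF]
      have hslt : Real.sqrt (1 - q) < 1 := by
        nlinarith [Real.sq_sqrt (le_of_lt h1q), Real.sqrt_nonneg (1 - q)]
      have : (0:ℝ) < ∑' i : ℕ,
          (Real.sqrt (q * (1 - q) ^ (i + 1)) - Real.sqrt (q * (1 - q) ^ i)) ^ 2 := by
        rw [fisher_geom hq0 hq1]
        exact pow_pos (by linarith) 2
      positivity
    have : 1 / F q < β := (div_lt_iff₀ hFpos).mpr (by linarith)
    rw [one_div] at this
    exact le_of_lt this
  have hinv : Tendsto (fun q => (F q)⁻¹) (nhdsWithin (0:ℝ) (Set.Ioi 0))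
      (nhds (Real.exp 2)⁻¹) := main_tendsto.inv₀ (Real.exp_ne_zero 2)
  have := le_of_tendsto hinv hev
  rwa [← Real.exp_neg] at this
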